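/- Let λ be a regular uncountable cardinal, ⟨θ_ε : ε < λ⟩ a sequence of infinite cardinals below λ, and F : ^λ2 → ∏_{ε<λ} θ_ε the block-coding map. If ∏_{ε<λ} θ_ε (with the <λ-box topology) is the union of a family ⟨U_i : i < κ⟩ of nowhere dense sets, then ^λ2 (with the <λ-box topology) is the union of the κ nowhere dense sets ⟨F^{-1}(U_i) : i < κ⟩. -/

import Mathlib

open Cardinal Set

/-- The type of ordinals below `o`, serving as the domain `λ` (for `o = λ.ord`). -/
abbrev Blw (o : Ordinal.{0}) := {α : Ordinal.{0} // α < o}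

/-- The space `^λ2` of functions from `λ` to `2` (for `o = λ.ord`). -/
abbrev CSp (o : Ordinal.{0}) := Blw o → Bool

/-- The cylinder `[ν] = {η ∈ ^λ2 : ν ⊴ η}` determined by `ν : β → 2`, `β < o`. -/
def cylC (o β : Ordinal.{0}) (ν : Blw β → Bool) : Set (CSp o) :=
  {η | ∀ (α : Ordinal.{0}) (hβ : α < β) (ho : α < o), η ⟨α, ho⟩ = ν ⟨α, hβ⟩}

/-- The `<λ`-box topology on `^λ2`: generated by the cylinders `[ν]`, `ν : β → 2`,
`β < o` (its open sets are exactly the unions of such cylinders). -/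
def boxC (o : Ordinal.{0}) : TopologicalSpace (CSp o) :=
  TopologicalSpace.generateFrom
    {S | ∃ β : Ordinal.{0}, β < o ∧ ∃ ν : Blw β → Bool, S = cylC o β ν}

/-- The product `∏_{ζ<λ} θ_ζ` (for `o = λ.ord`), as the set of functions
`η : λ → Ord` with `η ζ < θ ζ` for all `ζ < λ`. -/
def PSp (o : Ordinal.{0}) (θ : Blw o → Cardinal.{0}) : Type 1 :=
  {η : Blw o → Ordinal.{0} // ∀ ζ, η ζ < (θ ζ).ord}

/-- The cylinder `[ν] = {η ∈ ∏_{ζ<λ} θ_ζ : ν ⊴ η}` determined by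
`ν : ∏_{ζ<β} θ_ζ`, `β < o`. -/
def cylP (o : Ordinal.{0}) (θ : Blw o → Cardinal.{0}) (β : Ordinal.{0})
    (ν : Blw β → Ordinal.{0}) : Set (PSp o θ) :=
  {η | ∀ (α : Ordinal.{0}) (hβ : α < β) (ho : α < o), η.1 ⟨α, ho⟩ = ν ⟨α, hβ⟩}

/-- The `<λ`-box topology on `∏_{ζ<λ} θ_ζ`: generated by the cylinders `[ν]`,
`ν ∈ ∏_{ζ<β} θ_ζ`, `β < o` (its open sets are exactly the unions of such
cylinders). -/
def boxP (o : Ordinal.{0}) (θ : Blw o → Cardinal.{0}) : TopologicalSpace (PSp o θ) :=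
  TopologicalSpace.generateFrom
    {S | ∃ β : Ordinal.{0}, β < o ∧ ∃ ν : Blw β → Ordinal.{0},
      (∀ (α : Ordinal.{0}) (hβ : α < β) (ho : α < o), ν ⟨α, hβ⟩ < (θ ⟨α, ho⟩).ord) ∧
      S = cylP o θ β ν}
/-- `blockSum t ε = Σ_{ζ<ε} t ζ` (ordinal sum): `0` at `0`, `blockSum t δ + t δ`
at `δ+1`, and the supremum at limits. -/
noncomputable def blockSum (t : Ordinal.{0} → Ordinal.{0}) (ε : Ordinal.{0}) : Ordinal.{0} :=
  Ordinal.limitRecOn ε 0 (fun δ ih => ih + t δ)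
    (fun δ _ ih => ⨆ β : Set.Iio δ, ih β.1 β.2)

/-- `sFn lam θ ε = s(ε) = Σ_{ζ<ε} θ_ζ` (ordinal sum). -/
noncomputable def sFn (lam : Cardinal.{0}) (θ : Blw lam.ord → Cardinal.{0}) :
    Ordinal.{0} → Ordinal.{0} :=
  blockSum (fun ζ => if h : ζ < lam.ord then (θ ⟨ζ, h⟩).ord else 0)

/-- `F : ^λ2 → ∏_{ε<λ} θ_ε` is the block-coding map: `F(η)(ε) = 0` if
`η(s(ε)+i) = 0` for all `i < θ_ε`, and `F(η)(ε) = 1+i` for the least `i < θ_ε`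
with `η(s(ε)+i) = 1` otherwise. -/
def FSpec (lam : Cardinal.{0}) (θ : Blw lam.ord → Cardinal.{0})
    (F : CSp lam.ord → PSp lam.ord θ) : Prop :=
  ∀ (η : CSp lam.ord) (ε : Blw lam.ord),
    ((∀ i < (θ ε).ord, ∀ h : sFn lam θ ε.1 + i < lam.ord,
        η ⟨sFn lam θ ε.1 + i, h⟩ = false) → (F η).1 ε = 0) ∧
    (∀ i < (θ ε).ord, ∀ h : sFn lam θ ε.1 + i < lam.ord,
        η ⟨sFn lam θ ε.1 + i, h⟩ = true →
        (∀ j < i, ∀ h' : sFn lam θ ε.1 + j < lam.ord,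
          η ⟨sFn lam θ ε.1 + j, h'⟩ = false) →
        (F η).1 ε = 1 + i)
noncomputable section AuxBS
open Ordinal

theorem blockSum_zero (t : Ordinal.{0} → Ordinal.{0}) : blockSum t 0 = 0 := by
  simp only [blockSum]; rw [Ordinal.limitRecOn_zero]

theorem blockSum_succ (t : Ordinal.{0} → Ordinal.{0}) (δ : Ordinal.{0}) :
    blockSum t (δ + 1) = blockSum t δ + t δ := by
  simp only [blockSum]; rw [Ordinal.add_one_eq_succ, Ordinal.limitRecOn_succ]

theorem blockSum_limit (t : Ordinal.{0} → Ordinal.{0}) {δ : Ordinal.{0}} (h : Order.IsSuccLimit δ) :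
    blockSum t δ = ⨆ β : Set.Iio δ, blockSum t β.1 := by
  simp only [blockSum]; rw [Ordinal.limitRecOn_limit _ _ _ _ h]

theorem blockSum_bdd (t : Ordinal.{0} → Ordinal.{0}) (δ : Ordinal.{0}) :
    BddAbove (Set.range fun β : Set.Iio δ => blockSum t β.1) :=
  Ordinal.bddAbove_of_small

theorem blockSum_mono (t : Ordinal.{0} → Ordinal.{0}) {ε ε' : Ordinal.{0}} (h : ε ≤ ε') :
    blockSum t ε ≤ blockSum t ε' := by
  induction ε' using Ordinal.limitRecOn with
  | zero => rw [nonpos_iff_eq_zero.mp h]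
  | add_one δ ih =>
    rw [blockSum_succ]
    rcases lt_or_eq_of_le h with h' | h'
    · exact le_trans (ih (Order.lt_add_one_iff.mp h'))
        (le_self_add)
    · subst h'; rw [← blockSum_succ]
  | limit δ hlim ih =>
    rcases lt_or_eq_of_le h with h' | h'
    · rw [blockSum_limit t hlim]
      exact le_ciSup (blockSum_bdd t δ) ⟨ε, h'⟩
    · subst h'; exact le_rfl

theorem le_blockSum (t : Ordinal.{0} → Ordinal.{0}) (ε : Ordinal.{0})
    (ht : ∀ ζ < ε, 1 ≤ t ζ) : ε ≤ blockSum t ε := by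
  induction ε using Ordinal.limitRecOn with
  | zero => simp [blockSum_zero]
  | add_one δ ih =>
    rw [blockSum_succ]
    calc δ + 1 ≤ blockSum t δ + 1 := by
          apply add_le_add_left
          exact ih fun ζ hζ => ht ζ (hζ.trans (by exact lt_add_one δ))
      _ ≤ blockSum t δ + t δ := by
          apply add_le_add_right
          exact ht δ (by exact lt_add_one δ)
  | limit δ hlim ih =>
    rw [blockSum_limit t hlim]
    refine le_of_forall_lt fun c hc => ?_
    have h1 : c + 1 < δ := hlim.succ_lt hc
    calc c < c + 1 := lt_add_one c
      _ ≤ blockSum t (c + 1) := ih (c + 1) h1 (fun ζ hζ => ht ζ (hζ.trans_le h1.le))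
      _ ≤ ⨆ β : Set.Iio δ, blockSum t β.1 := le_ciSup (blockSum_bdd t δ) ⟨c + 1, h1⟩

end AuxBS

noncomputable section AuxS
open Ordinal

variable (lam : Cardinal.{0}) (θ : Blw lam.ord → Cardinal.{0})

theorem sFn_mono {ε ε' : Ordinal.{0}} (h : ε ≤ ε') : sFn lam θ ε ≤ sFn lam θ ε' :=
  blockSum_mono _ h

theorem sFn_succ {ε : Ordinal.{0}} (h : ε < lam.ord) :
    sFn lam θ (ε + 1) = sFn lam θ ε + (θ ⟨ε, h⟩).ord := by
  rw [sFn, blockSum_succ]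
  simp only [dif_pos h]

theorem le_sFn (hθ : ∀ ζ, ℵ₀ ≤ θ ζ) {ε : Ordinal.{0}} (hε : ε ≤ lam.ord) :
    ε ≤ sFn lam θ ε := by
  refine le_blockSum _ _ fun ζ hζ => ?_
  have hζo : ζ < lam.ord := hζ.trans_le hε
  rw [dif_pos hζo]
  rw [Ordinal.one_le_iff_ne_zero]
  intro h0
  have := hθ ⟨ζ, hζo⟩
  rw [← Cardinal.card_ord (θ ⟨ζ, hζo⟩), h0] at this
  simp at this
  exact (Cardinal.aleph0_ne_zero this).elim

theorem sFn_lt (hreg : lam.IsRegular) (hunc : ℵ₀ < lam) (hθ : ∀ ζ, θ ζ < lam)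
    {ε : Ordinal.{0}} (h : ε < lam.ord) : sFn lam θ ε < lam.ord := by
  have hlam : ℵ₀ ≤ lam := hunc.le
  induction ε using Ordinal.limitRecOn with
  | zero =>
    show blockSum _ 0 < _
    rw [blockSum_zero]
    exact h
  | add_one δ ih =>
    have hδ : δ < lam.ord := (Order.le_succ δ).trans_lt h
    rw [sFn_succ lam θ hδ]
    rw [Cardinal.lt_ord, Ordinal.card_add, Cardinal.card_ord]
    exact Cardinal.add_lt_of_lt hlam (Cardinal.lt_ord.mp (ih hδ)) (hθ _)
  | limit δ hlim ih =>
    show blockSum _ δ < _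
    rw [blockSum_limit _ hlim]
    set t : Ordinal.{0} → Ordinal.{0} :=
      (fun ζ => if h : ζ < lam.ord then (θ ⟨ζ, h⟩).ord else 0) with ht
    have key : (Set.range fun β : Set.Iio δ => blockSum t β.1)
        = Set.range fun x : δ.ToType => blockSum
            t ((Ordinal.ToType.mk (o := δ)).symm x).1 := by
      exact ((Ordinal.ToType.mk (o := δ)).symm.surjective.range_comp
        (fun β : Set.Iio δ => blockSum t β.1)).symm
    rw [iSup, key, ← iSup]
    refine Ordinal.iSup_lt_ord ?_ fun x => ?_
    · rw [Cardinal.mk_toType, hreg.cof_eq]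
      exact Cardinal.lt_ord.mp h
    · exact ih _ ((Ordinal.ToType.mk (o := δ)).symm x).2 (((Ordinal.ToType.mk (o := δ)).symm x).2.trans h)

theorem sFn_strict_block {ε : Ordinal.{0}}
    (h : ε < lam.ord) {i : Ordinal.{0}} (hi : i < (θ ⟨ε, h⟩).ord) :
    sFn lam θ ε + i < sFn lam θ (ε + 1) := by
  rw [sFn_succ lam θ h]
  exact (add_lt_add_iff_left _).mpr hi

end AuxS

section AuxF
open Ordinal

variable {lam : Cardinal.{0}} {θ : Blw lam.ord → Cardinal.{0}}

theorem succ_lt_o (hunc : ℵ₀ < lam) {ε : Ordinal.{0}} (hε : ε < lam.ord) : ε + 1 < lam.ord := by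
  rw [Ordinal.add_one_eq_succ]
  exact (Cardinal.isSuccLimit_ord hunc.le).succ_lt hε

theorem pos_lt_o (hreg : lam.IsRegular) (hunc : ℵ₀ < lam) (hθlt : ∀ ζ, θ ζ < lam)
    {ε : Ordinal.{0}} (hε : ε < lam.ord) {i : Ordinal.{0}} (hi : i < (θ ⟨ε, hε⟩).ord) :
    sFn lam θ ε + i < lam.ord :=
  (sFn_strict_block lam θ hε hi).trans_le
    ((sFn_lt lam θ hreg hunc hθlt (succ_lt_o hunc hε)).le)

theorem block_unique {ε₁ ε₂ α : Ordinal.{0}}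
    (ha₁ : sFn lam θ ε₁ ≤ α) (hb₁ : α < sFn lam θ (ε₁ + 1))
    (ha₂ : sFn lam θ ε₂ ≤ α) (hb₂ : α < sFn lam θ (ε₂ + 1)) : ε₁ = ε₂ := by
  rcases lt_trichotomy ε₁ ε₂ with h | h | h
  · exact absurd (hb₁.trans_le ((sFn_mono lam θ (by rwa [Ordinal.add_one_eq_succ, Order.succ_le_iff])).trans ha₂)) (lt_irrefl α)
  · exact h
  · exact absurd (hb₂.trans_le ((sFn_mono lam θ (by rwa [Ordinal.add_one_eq_succ, Order.succ_le_iff])).trans ha₁)) (lt_irrefl α)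

/-- If the least `true` position in block `ε` of `η` is `i₀`, then `F η ε = 1 + i₀`. -/
theorem F_block_congr {F : CSp lam.ord → PSp lam.ord θ} (hF : FSpec lam θ F)
    (η η' : CSp lam.ord) (ε : Blw lam.ord)
    (hagree : ∀ i < (θ ε).ord, ∀ h : sFn lam θ ε.1 + i < lam.ord,
      η ⟨sFn lam θ ε.1 + i, h⟩ = η' ⟨sFn lam θ ε.1 + i, h⟩) :
    (F η).1 ε = (F η').1 ε := by
  by_cases hall : ∀ i < (θ ε).ord, ∀ h : sFn lam θ ε.1 + i < lam.ord,
      η ⟨sFn lam θ ε.1 + i, h⟩ = false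
  · rw [(hF η ε).1 hall, (hF η' ε).1 (fun i hi h => by
      rw [← hagree i hi h]; exact hall i hi h)]
  · push_neg at hall
    obtain ⟨i, hi, h, hne⟩ := hall
    set S : Set Ordinal.{0} :=
      {j | ∃ hj : j < (θ ε).ord, ∃ h' : sFn lam θ ε.1 + j < lam.ord,
        η ⟨sFn lam θ ε.1 + j, h'⟩ = true} with hS
    have hSne : S.Nonempty := ⟨i, hi, h, by simpa using hne⟩
    set i₀ := Ordinal.lt_wf.min S hSne with hi₀
    obtain ⟨hi₀θ, h₀, htrue⟩ := Ordinal.lt_wf.min_mem S hSne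
    have hleast : ∀ j < i₀, ∀ h' : sFn lam θ ε.1 + j < lam.ord,
        η ⟨sFn lam θ ε.1 + j, h'⟩ = false := by
      intro j hj h'
      by_contra hc
      exact Ordinal.lt_wf.not_lt_min S ⟨hj.trans hi₀θ, h', by simpa using hc⟩ hj
    rw [(hF η ε).2 i₀ hi₀θ h₀ htrue hleast,
      (hF η' ε).2 i₀ hi₀θ h₀ (by rw [← hagree i₀ hi₀θ h₀]; exact htrue)
        (fun j hj h' => by rw [← hagree j (hj.trans hi₀θ) h']; exact hleast j hj h')]

end AuxF

section AuxTop
open TopologicalSpace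

variable {o : Ordinal.{0}} {θ : Blw o → Cardinal.{0}}

/-- Restriction of `η : CSp o` to `Blw γ`. -/
def restC (o γ : Ordinal.{0}) (hγ : γ ≤ o) (η : CSp o) : Blw γ → Bool :=
  fun a => η ⟨a.1, a.2.trans_le hγ⟩

theorem self_mem_cylC_rest (γ : Ordinal.{0}) (hγ : γ ≤ o) (η : CSp o) :
    η ∈ cylC o γ (restC o γ hγ η) := fun _ _ _ => rfl

theorem cylC_rest_subset {β γ : Ordinal.{0}} (hγ : γ ≤ o) (hβγ : β ≤ γ)
    {ν : Blw β → Bool} {η : CSp o} (hη : η ∈ cylC o β ν) :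
    cylC o γ (restC o γ hγ η) ⊆ cylC o β ν := by
  intro η' hη' α hβ ho
  have h1 := hη' α (hβ.trans_le hβγ) ho
  rw [h1]
  exact hη α hβ ho

theorem cylC_nonempty {γ : Ordinal.{0}} (hγ : γ ≤ o) (ν : Blw γ → Bool) :
    (cylC o γ ν).Nonempty := by
  refine ⟨fun a => if h : a.1 < γ then ν ⟨a.1, h⟩ else false, fun α hβ ho => ?_⟩
  simp only [dif_pos hβ]

theorem isBasis_C (ho : 0 < o) :
    @IsTopologicalBasis (CSp o) (boxC o)
      {S | ∃ β : Ordinal.{0}, β < o ∧ ∃ ν : Blw β → Bool, S = cylC o β ν} := by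
  letI := boxC o
  refine ⟨?_, ?_, rfl⟩
  · rintro t₁ ⟨β₁, hβ₁, ν₁, rfl⟩ t₂ ⟨β₂, hβ₂, ν₂, rfl⟩ x hx
    have hm : max β₁ β₂ < o := max_lt hβ₁ hβ₂
    refine ⟨cylC o (max β₁ β₂) (restC o _ hm.le x), ⟨_, hm, _, rfl⟩,
      self_mem_cylC_rest _ hm.le x, ?_⟩
    exact Set.subset_inter (cylC_rest_subset hm.le (le_max_left _ _) hx.1)
      (cylC_rest_subset hm.le (le_max_right _ _) hx.2)
  · apply Set.eq_univ_of_forall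
    intro x
    refine ⟨cylC o 0 (fun _ => false), ⟨0, ho, _, rfl⟩, fun α hβ _ => absurd hβ (not_lt_of_ge (zero_le (a := α)))⟩

/-- Restriction of `η : PSp o θ` to `Blw γ`. -/
def restP (o : Ordinal.{0}) (θ : Blw o → Cardinal.{0}) (γ : Ordinal.{0}) (hγ : γ ≤ o)
    (η : PSp o θ) : Blw γ → Ordinal.{0} :=
  fun a => η.1 ⟨a.1, a.2.trans_le hγ⟩

theorem restP_bounds (γ : Ordinal.{0}) (hγ : γ ≤ o) (η : PSp o θ) :
    ∀ (α : Ordinal.{0}) (hβ : α < γ) (ho' : α < o),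
      restP o θ γ hγ η ⟨α, hβ⟩ < (θ ⟨α, ho'⟩).ord := fun _ _ _ => η.2 _

theorem self_mem_cylP_rest (γ : Ordinal.{0}) (hγ : γ ≤ o) (η : PSp o θ) :
    η ∈ cylP o θ γ (restP o θ γ hγ η) := fun _ _ _ => rfl

theorem cylP_rest_subset {β γ : Ordinal.{0}} (hγ : γ ≤ o) (hβγ : β ≤ γ)
    {ν : Blw β → Ordinal.{0}} {η : PSp o θ} (hη : η ∈ cylP o θ β ν) :
    cylP o θ γ (restP o θ γ hγ η) ⊆ cylP o θ β ν := by
  intro η' hη' α hβ ho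
  have h1 := hη' α (hβ.trans_le hβγ) ho
  rw [h1]
  exact hη α hβ ho

theorem cylP_nonempty (hθpos : ∀ ζ, (0:Ordinal.{0}) < (θ ζ).ord) {γ : Ordinal.{0}} (hγ : γ ≤ o)
    (ν : Blw γ → Ordinal.{0})
    (hν : ∀ (α : Ordinal.{0}) (hβ : α < γ) (ho' : α < o), ν ⟨α, hβ⟩ < (θ ⟨α, ho'⟩).ord) :
    (cylP o θ γ ν).Nonempty := by
  refine ⟨⟨fun a => if h : a.1 < γ then ν ⟨a.1, h⟩ else 0, fun ζ => ?_⟩, fun α hβ ho => ?_⟩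
  · by_cases h : ζ.1 < γ
    · simpa only [dif_pos h] using hν ζ.1 h ζ.2
    · simpa only [dif_neg h] using hθpos ζ
  · simp only [dif_pos hβ]

theorem isBasis_P (ho : 0 < o) :
    @IsTopologicalBasis (PSp o θ) (boxP o θ)
      {S | ∃ β : Ordinal.{0}, β < o ∧ ∃ ν : Blw β → Ordinal.{0},
        (∀ (α : Ordinal.{0}) (hβ : α < β) (ho : α < o), ν ⟨α, hβ⟩ < (θ ⟨α, ho⟩).ord) ∧
        S = cylP o θ β ν} := by
  letI := boxP o θ
  refine ⟨?_, ?_, rfl⟩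
  · rintro t₁ ⟨β₁, hβ₁, ν₁, hb₁, rfl⟩ t₂ ⟨β₂, hβ₂, ν₂, hb₂, rfl⟩ x hx
    have hm : max β₁ β₂ < o := max_lt hβ₁ hβ₂
    refine ⟨cylP o θ (max β₁ β₂) (restP o θ _ hm.le x), ⟨_, hm, _, restP_bounds _ hm.le x, rfl⟩,
      self_mem_cylP_rest _ hm.le x, ?_⟩
    exact Set.subset_inter (cylP_rest_subset hm.le (le_max_left _ _) hx.1)
      (cylP_rest_subset hm.le (le_max_right _ _) hx.2)
  · apply Set.eq_univ_of_forall
    intro x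
    exact ⟨cylP o θ 0 (fun _ => 0), ⟨0, ho, _, fun α hβ _ => absurd hβ (not_lt_of_ge (zero_le (a := α))), rfl⟩,
      fun α hβ _ => absurd hβ (not_lt_of_ge (zero_le (a := α)))⟩

theorem isOpen_cylC {β : Ordinal.{0}} (hβ : β < o) (ν : Blw β → Bool) :
    @IsOpen _ (boxC o) (cylC o β ν) :=
  TopologicalSpace.isOpen_generateFrom_of_mem ⟨β, hβ, ν, rfl⟩

theorem isOpen_cylP {β : Ordinal.{0}} (hβ : β < o) (ν : Blw β → Ordinal.{0})
    (hν : ∀ (α : Ordinal.{0}) (hb : α < β) (ho : α < o), ν ⟨α, hb⟩ < (θ ⟨α, ho⟩).ord) :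
    @IsOpen _ (boxP o θ) (cylP o θ β ν) :=
  TopologicalSpace.isOpen_generateFrom_of_mem ⟨β, hβ, ν, hν, rfl⟩

end AuxTop

section AuxKey
open Ordinal TopologicalSpace

/-- Key construction: inside every cylinder of `CSp` there is a subcylinder whose `F`-image
avoids a given nowhere dense set. -/
theorem key_cyl {lam : Cardinal.{0}} {θ : Blw lam.ord → Cardinal.{0}} (hreg : lam.IsRegular)
    (hunc : ℵ₀ < lam) (hθ : ∀ ζ, ℵ₀ ≤ θ ζ ∧ θ ζ < lam)
    {F : CSp lam.ord → PSp lam.ord θ} (hF : FSpec lam θ F)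
    {Ui : Set (PSp lam.ord θ)} (hUi : @IsNowhereDense _ (boxP lam.ord θ) Ui)
    {γ : Ordinal.{0}} (hγ : γ < lam.ord) (ρ : Blw γ → Bool) :
    ∃ (β : Ordinal.{0}) (_ : β < lam.ord) (ρ₂ : Blw β → Bool),
      (cylC lam.ord β ρ₂).Nonempty ∧ cylC lam.ord β ρ₂ ⊆ cylC lam.ord γ ρ ∧
      ∀ η' ∈ cylC lam.ord β ρ₂, F η' ∉ Ui := by
  classical
  letI := boxP lam.ord θ
  have hlam : ℵ₀ ≤ lam := hunc.le
  have holim : Order.IsSuccLimit lam.ord := Cardinal.isSuccLimit_ord hlam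
  have ho : (0:Ordinal.{0}) < lam.ord := holim.pos
  have hθae : ∀ ζ, ℵ₀ ≤ θ ζ := fun ζ => (hθ ζ).1
  have hθlt : ∀ ζ, θ ζ < lam := fun ζ => (hθ ζ).2
  have hθpos : ∀ ζ, (0:Ordinal.{0}) < (θ ζ).ord := fun ζ => by
    rw [Cardinal.lt_ord]
    simpa using Cardinal.aleph0_pos.trans_le (hθae ζ)
  set s : Ordinal.{0} → Ordinal.{0} := sFn lam θ with hs_def
  -- step 1: the base point η₁ and the trace ν of `F` on `Blw γ`
  set η₁ : CSp lam.ord := (fun a => if h : a.1 < γ then ρ ⟨a.1, h⟩ else false) with hη₁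
  set ν : Blw γ → Ordinal.{0} := (fun a => (F η₁).1 ⟨a.1, a.2.trans hγ⟩) with hν_def
  have hνb : ∀ (α : Ordinal.{0}) (hβ : α < γ) (ho' : α < lam.ord),
      ν ⟨α, hβ⟩ < (θ ⟨α, ho'⟩).ord := fun α hβ ho' => (F η₁).2 _
  -- step 2: pick ξ in [ν] avoiding the closure of Ui
  have hcylν : (cylP lam.ord θ γ ν).Nonempty := cylP_nonempty hθpos hγ.le ν hνb
  have hopenν : IsOpen (cylP lam.ord θ γ ν) := isOpen_cylP hγ ν hνb
  have hexξ : ∃ ξ ∈ cylP lam.ord θ γ ν, ξ ∉ closure Ui := by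
    by_contra hcon
    push_neg at hcon
    have hsub : cylP lam.ord θ γ ν ⊆ interior (closure Ui) :=
      hopenν.subset_interior_iff.mpr hcon
    rw [hUi] at hsub
    exact hcylν.not_subset_empty hsub
  obtain ⟨ξ, hξν, hξcl⟩ := hexξ
  -- step 3: a basic cylinder around ξ missing Ui
  rw [mem_closure_iff] at hξcl
  push_neg at hξcl
  obtain ⟨W, hWo, hξW, hWU⟩ := hξcl
  obtain ⟨v, ⟨δ₀, hδ₀, ν₀, hb₀, rfl⟩, hξv, hvW⟩ :=
    (isBasis_P ho).exists_subset_of_mem_open hξW hWo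
  have hδ'o : max δ₀ γ < lam.ord := max_lt hδ₀ hγ
  set δ' : Ordinal.{0} := max δ₀ γ with hδ'_def
  have hγδ' : γ ≤ δ' := le_max_right _ _
  set ν'' : Blw δ' → Ordinal.{0} := restP lam.ord θ δ' hδ'o.le ξ with hν''
  have hmiss : ∀ p ∈ cylP lam.ord θ δ' ν'', p ∉ Ui := fun p hp hpU =>
    Set.eq_empty_iff_forall_notMem.mp hWU p
      ⟨hvW (cylP_rest_subset hδ'o.le (le_max_left _ _) hξv hp), hpU⟩
  have hξν'' : ξ ∈ cylP lam.ord θ δ' ν'' := self_mem_cylP_rest δ' hδ'o.le ξ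
  -- step 4: the encoding point η₂
  have hβo : s δ' < lam.ord := sFn_lt lam θ hreg hunc hθlt hδ'o
  set P : Ordinal.{0} → Prop :=
    (fun α => ∃ ε, γ ≤ ε ∧ ε < δ' ∧ s ε ≤ α ∧ α < s (ε + 1)) with hP_def
  set Q : Ordinal.{0} → Prop :=
    (fun α => ∃ (ε : Ordinal.{0}) (hεo : ε < lam.ord), γ ≤ ε ∧ ε < δ' ∧ s ε ≤ α ∧ α < s (ε + 1) ∧
      ξ.1 ⟨ε, hεo⟩ ≠ 0 ∧ α = s ε + (ξ.1 ⟨ε, hεo⟩ - 1)) with hQ_def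
  set η₂ : CSp lam.ord := (fun a => if Q a.1 then true else if P a.1 then false else η₁ a) with hη₂
  have hγsγ : γ ≤ s γ := le_sFn lam θ hθae hγ.le
  -- η₂ agrees with η₁ below s γ
  have hlow : ∀ a : Blw lam.ord, a.1 < s γ → η₂ a = η₁ a := by
    intro a ha
    have hnP : ¬ P a.1 := by
      rintro ⟨ε, hγε, -, hle, -⟩
      exact absurd ((sFn_mono lam θ hγε).trans hle) (not_le.mpr ha)
    have hnQ : ¬ Q a.1 := by
      rintro ⟨ε, hεo, hγε, hεδ, hle, hlt, -⟩
      exact hnP ⟨ε, hγε, hεδ, hle, hlt⟩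
    rw [hη₂]
    simp only [if_neg hnQ, if_neg hnP]
  -- evaluation of η₂ on blocks in [γ, δ')
  have heval : ∀ (ε : Ordinal.{0}) (hεo : ε < lam.ord), γ ≤ ε → ε < δ' →
      ∀ (i : Ordinal.{0}) (hi : i < (θ ⟨ε, hεo⟩).ord) (hp : s ε + i < lam.ord),
      η₂ ⟨s ε + i, hp⟩ =
        if ξ.1 ⟨ε, hεo⟩ ≠ 0 ∧ i = ξ.1 ⟨ε, hεo⟩ - 1 then true else false := by
    intro ε hεo hγε hεδ i hi hp
    have hle : s ε ≤ s ε + i := le_self_add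
    have hlt : s ε + i < s (ε + 1) := sFn_strict_block lam θ hεo hi
    have hP' : P (s ε + i) := ⟨ε, hγε, hεδ, hle, hlt⟩
    by_cases hcond : ξ.1 ⟨ε, hεo⟩ ≠ 0 ∧ i = ξ.1 ⟨ε, hεo⟩ - 1
    · have hQ' : Q (s ε + i) :=
        ⟨ε, hεo, hγε, hεδ, hle, hlt, hcond.1, by rw [← hcond.2]⟩
      rw [hη₂]
      simp only [if_pos hQ', if_pos hcond]
    · have hnQ : ¬ Q (s ε + i) := by
        rintro ⟨ε', hε'o, hγε', hε'δ, hle', hlt', hne0, heqα⟩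
        have heqε : ε' = ε := block_unique hle' hlt' hle hlt
        subst heqε
        exact hcond ⟨hne0, (add_right_inj (s ε')).mp heqα⟩
      rw [hη₂]
      simp only [if_neg hnQ, if_pos hP', if_neg hcond]
  -- F η₂ agrees with ξ below δ'
  have hFη₂ : ∀ (ε : Ordinal.{0}) (hεo : ε < lam.ord), ε < δ' →
      (F η₂).1 ⟨ε, hεo⟩ = ξ.1 ⟨ε, hεo⟩ := by
    intro ε hεo hεδ
    rcases lt_or_ge ε γ with hεγ | hγε
    · -- η₂ agrees with η₁ on block ε, and ξ agrees with ν there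
      have hsucγ : ε + 1 ≤ γ := by rwa [Ordinal.add_one_eq_succ, Order.succ_le_iff]
      have hcong : (F η₂).1 ⟨ε, hεo⟩ = (F η₁).1 ⟨ε, hεo⟩ := by
        refine F_block_congr hF η₂ η₁ ⟨ε, hεo⟩ fun i hi h => ?_
        exact hlow _ (lt_of_lt_of_le (sFn_strict_block lam θ hεo hi)
          (sFn_mono lam θ hsucγ))
      rw [hcong, hξν ε hεγ hεo]
    · by_cases h0 : ξ.1 ⟨ε, hεo⟩ = 0
      · rw [h0]
        refine (hF η₂ ⟨ε, hεo⟩).1 fun i hi h => ?_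
        rw [heval ε hεo hγε hεδ i hi h]
        simp [h0]
      · have h1ζ : (1:Ordinal.{0}) ≤ ξ.1 ⟨ε, hεo⟩ := Ordinal.one_le_iff_ne_zero.mpr h0
        have hi₀ : ξ.1 ⟨ε, hεo⟩ - 1 < (θ ⟨ε, hεo⟩).ord :=
          (Ordinal.sub_le_self _ _).trans_lt (ξ.2 ⟨ε, hεo⟩)
        have hp : s ε + (ξ.1 ⟨ε, hεo⟩ - 1) < lam.ord := pos_lt_o hreg hunc hθlt hεo hi₀
        have htrue : η₂ ⟨s ε + (ξ.1 ⟨ε, hεo⟩ - 1), hp⟩ = true := by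
          rw [heval ε hεo hγε hεδ _ hi₀ hp]
          simp [h0]
        have hleast : ∀ j < ξ.1 ⟨ε, hεo⟩ - 1, ∀ h' : s ε + j < lam.ord,
            η₂ ⟨s ε + j, h'⟩ = false := by
          intro j hj h'
          rw [heval ε hεo hγε hεδ j (hj.trans hi₀) h']
          simp only [ite_eq_right_iff, and_imp]
          intro _ hje
          exact absurd hje (ne_of_lt hj)
        rw [(hF η₂ ⟨ε, hεo⟩).2 _ hi₀ hp htrue hleast]
        exact Ordinal.add_sub_cancel_of_le h1ζ
  -- step 5: conclusion
  refine ⟨s δ', hβo, restC lam.ord (s δ') hβo.le η₂, ⟨η₂, self_mem_cylC_rest _ hβo.le η₂⟩, ?_, ?_⟩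
  · -- subset of the original cylinder
    intro η' hη' α hβ hoα
    have hαs : α < s δ' := hβ.trans_le (hγsγ.trans (sFn_mono lam θ hγδ'))
    have h1 := hη' α hαs hoα
    exact h1.trans ((hlow ⟨α, hoα⟩ (hβ.trans_le hγsγ)).trans (by rw [hη₁]; exact dif_pos hβ))
  · -- image avoids Ui
    intro η' hη' hη'U
    refine hmiss (F η') ?_ hη'U
    intro ε hεδ hεo
    have hblock : (F η').1 ⟨ε, hεo⟩ = (F η₂).1 ⟨ε, hεo⟩ := by
      refine F_block_congr hF η' η₂ ⟨ε, hεo⟩ fun i hi h => ?_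
      have hsucδ : ε + 1 ≤ δ' := by rwa [Ordinal.add_one_eq_succ, Order.succ_le_iff]
      have hαs : s ε + i < s δ' :=
        (sFn_strict_block lam θ hεo hi).trans_le (sFn_mono lam θ hsucδ)
      exact hη' _ hαs h
    rw [hblock, hFη₂ ε hεo hεδ]
    rfl

end AuxKey

/-- for `λ` regular uncountable, `⟨θ_ε : ε < λ⟩` infinite cardinals
below `λ`, and `F` the block-coding map, if `∏_{ε<λ} θ_ε` is the union of a
family `⟨U_i : i < κ⟩` of nowhere dense sets, then `^λ2` is the union of the `κ`
nowhere dense sets `⟨F⁻¹(U_i) : i < κ⟩` (`<λ`-box topologies). -/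
theorem blockCoding_cover_nowhereDense (lam κ : Cardinal.{0}) (hreg : lam.IsRegular)
    (hunc : ℵ₀ < lam) (θ : Blw lam.ord → Cardinal.{0})
    (hθ : ∀ ζ, ℵ₀ ≤ θ ζ ∧ θ ζ < lam)
    (F : CSp lam.ord → PSp lam.ord θ) (hF : FSpec lam θ F)
    (U : Blw κ.ord → Set (PSp lam.ord θ))
    (hU : ∀ i, @IsNowhereDense _ (boxP lam.ord θ) (U i))
    (hcover : (⋃ i, U i) = Set.univ) :
    (∀ i, @IsNowhereDense _ (boxC lam.ord) (F ⁻¹' U i)) ∧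
    (⋃ i, F ⁻¹' U i) = Set.univ := by
  classical
  have hlam : ℵ₀ ≤ lam := hunc.le
  have holim : Order.IsSuccLimit lam.ord := Cardinal.isSuccLimit_ord hlam
  have ho : (0:Ordinal.{0}) < lam.ord := holim.pos
  constructor
  · intro i
    letI := boxC lam.ord
    show interior (closure (F ⁻¹' U i)) = ∅
    rw [Set.eq_empty_iff_forall_notMem]
    intro x hx
    obtain ⟨v, ⟨γ, hγ, ρ, rfl⟩, hxv, hvO⟩ :=
      (isBasis_C ho).exists_subset_of_mem_open hx isOpen_interior
    obtain ⟨β, hβ, ρ₂, hne, hsub, hmiss⟩ := key_cyl hreg hunc hθ hF (hU i) hγ ρ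
    obtain ⟨y, hy⟩ := hne
    have hyc : y ∈ closure (F ⁻¹' U i) := interior_subset (hvO (hsub hy))
    rw [mem_closure_iff] at hyc
    obtain ⟨z, hz1, hz2⟩ := hyc _ (isOpen_cylC hβ ρ₂) hy
    exact hmiss z hz1 hz2
  · rw [← Set.preimage_iUnion, hcover, Set.preimage_univ]
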